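/- Let f(n) denote the number of solutions to equation (1) with parameter n. There exist positive constants C₁ and C₂ such that for all sufficiently large T, C₁·T·(log T)³ < Σ_{n=2}^{⌊T⌋} f(n) < C₂·T·(log T)³. -/

import Mathlib

/-- The number of solutions `(X, x, Y, y)` in positive integers with `1 < x < y`
to `(X + 1/x)(Y + 1/y) = n`, i.e. `(Xx + 1)(Yy + 1) = n·x·y`, where a quadruple
`q` encodes `(X, x, Y, y) = (q.1, q.2.1, q.2.2.1, q.2.2.2)`. -/
noncomputable def numSolutions (n : ℕ) : ℕ :=
  Nat.card {q : ℕ × ℕ × ℕ × ℕ | 0 < q.1 ∧ 0 < q.2.2.1 ∧ 1 < q.2.1 ∧ q.2.1 < q.2.2.2 ∧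
    (q.1 * q.2.1 + 1) * (q.2.2.1 * q.2.2.2 + 1) = n * q.2.1 * q.2.2.2}

open Finset

namespace AvgF

def solPred (n : ℕ) (q : ℕ × ℕ × ℕ × ℕ) : Prop :=
  0 < q.1 ∧ 0 < q.2.2.1 ∧ 1 < q.2.1 ∧ q.2.1 < q.2.2.2 ∧
    (q.1 * q.2.1 + 1) * (q.2.2.1 * q.2.2.2 + 1) = n * q.2.1 * q.2.2.2

instance (n : ℕ) : DecidablePred (solPred n) := fun _ => by unfold solPred; infer_instance

def parPred (n : ℕ) (q : ℕ × ℕ × ℕ × ℕ) : Prop :=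
  1 ≤ q.2.2.1 ∧ q.2.2.1 ≤ q.1 ∧ 1 < q.2.1 ∧ q.2.2.1 ∣ (q.1 * q.2.1 + 1) ∧
    q.2.2.1 < q.2.2.2 * q.2.1 ∧ 1 ≤ q.2.2.2 ∧
    q.2.2.2 * (q.1 * q.2.1 + 1) = n + q.1 * q.2.2.1

instance (n : ℕ) : DecidablePred (parPred n) := fun _ => by unfold parPred; infer_instance

def box (N : ℕ) : Finset (ℕ × ℕ × ℕ × ℕ) := range N ×ˢ range N ×ˢ range N ×ˢ range N

lemma mem_box {N : ℕ} {q : ℕ × ℕ × ℕ × ℕ} :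
    q ∈ box N ↔ q.1 < N ∧ q.2.1 < N ∧ q.2.2.1 < N ∧ q.2.2.2 < N := by
  simp [box]

lemma mem_box' {N X x Y y : ℕ} :
    (X, x, Y, y) ∈ box N ↔ X < N ∧ x < N ∧ Y < N ∧ y < N := by
  simp [box]

def solsF (n : ℕ) : Finset (ℕ × ℕ × ℕ × ℕ) := (box (2*n^2+2)).filter (solPred n)

def paramsF (n : ℕ) : Finset (ℕ × ℕ × ℕ × ℕ) := (box (n+1)).filter (parPred n)

lemma add_le_mul_succ {X Y : ℕ} (hX : 0 < X) (hY : 0 < Y) : X + Y ≤ X * Y + 1 := by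
  obtain ⟨a, rfl⟩ : ∃ a, X = a + 1 := ⟨X - 1, by omega⟩
  obtain ⟨b, rfl⟩ : ∃ b, Y = b + 1 := ⟨Y - 1, by omega⟩
  have : (a + 1) * (b + 1) = a * b + a + b + 1 := by ring
  omega

/-- Structure extraction from a solution. -/
lemma sol_struct {n X x Y y : ℕ} (hX : 0 < X) (hY : 0 < Y) (hx : 1 < x) (hxy : x < y)
    (heq : (X * x + 1) * (Y * y + 1) = n * x * y) :
    ∃ d m : ℕ, d * y = X * x + 1 ∧ m * x = Y + d ∧ m * (X * x + 1) = n + X * d ∧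
      1 ≤ d ∧ d ≤ X ∧ 1 ≤ m ∧ X * Y + m = n := by
  have hy : 0 < y := lt_trans (lt_trans one_pos hx) hxy
  have hxpos : 0 < x := lt_trans one_pos hx
  have key : X * Y * (x * y) + (X * x + Y * y + 1) = n * (x * y) := by
    have e1 : (X * x + 1) * (Y * y + 1) = X * Y * (x * y) + (X * x + Y * y + 1) := by ring
    rw [e1] at heq; linarith [heq]
  have hXYn : X * Y < n := by
    by_contra h
    push_neg at h
    have : n * (x * y) ≤ X * Y * (x * y) := Nat.mul_le_mul_right _ h
    omega
  set m := n - X * Y with hm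
  have hm1 : 1 ≤ m := by omega
  have hmn : X * Y + m = n := by omega
  have hmkey : m * (x * y) = X * x + Y * y + 1 := by
    have : (X * Y + m) * (x * y) = n * (x * y) := by rw [hmn]
    nlinarith [this, key]
  have hmxY : Y < m * x := by
    by_contra h
    push_neg at h
    have : m * x * y ≤ Y * y := Nat.mul_le_mul_right _ h
    nlinarith [hmkey]
  set d := m * x - Y with hd
  have hmx : m * x = Y + d := by omega
  have hdy : d * y = X * x + 1 := by
    have : (Y + d) * y = m * (x * y) := by rw [← hmx]; ring
    nlinarith [hmkey, this]
  have hd1 : 1 ≤ d := by omega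
  have hdX : d ≤ X := by
    have hdpos : 0 < d := hd1
    have h1 : d * x < d * y := by
      exact Nat.mul_lt_mul_of_le_of_lt (le_refl d) hxy hdpos
    rw [hdy] at h1
    have : d * x ≤ X * x := by omega
    exact Nat.le_of_mul_le_mul_right this hxpos
  refine ⟨d, m, hdy, hmx, ?_, hd1, hdX, hm1, hmn⟩
  have e : m * (X * x + 1) = X * (m * x) + m := by ring
  rw [e, hmx]
  have e2 : X * (Y + d) + m = (X * Y + m) + X * d := by ring
  rw [e2, hmn]

/-- Structure extraction from a parameter quadruple. -/
lemma par_struct {n X x d m : ℕ} (hd1 : 1 ≤ d) (hdX : d ≤ X) (hx : 1 < x)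
    (hdvd : d ∣ (X * x + 1)) (hdm : d < m * x) (hm1 : 1 ≤ m)
    (heq : m * (X * x + 1) = n + X * d) :
    ∃ Y y : ℕ, Y = m * x - d ∧ d * y = X * x + 1 ∧ 0 < Y ∧ x < y ∧
      (X * x + 1) * (Y * y + 1) = n * x * y ∧ X * Y + m = n ∧ 0 < X := by
  have hX : 0 < X := lt_of_lt_of_le hd1 hdX
  obtain ⟨y, hy⟩ := hdvd
  have hdy : d * y = X * x + 1 := hy.symm
  have hxy : x < y := by
    have h1 : d * x < d * y := by
      calc d * x ≤ X * x := Nat.mul_le_mul_right _ hdX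
        _ < X * x + 1 := Nat.lt_succ_self _
        _ = d * y := hdy.symm
    exact lt_of_mul_lt_mul_left h1 (Nat.zero_le d)
  set Y := m * x - d with hYdef
  have hY : 0 < Y := by omega
  have hmx : m * x = Y + d := by omega
  have hn : X * Y + m = n := by
    have e : m * (X * x + 1) = X * (m * x) + m := by ring
    rw [e, hmx] at heq
    have e2 : X * (Y + d) + m = (X * Y + m) + X * d := by ring
    rw [e2] at heq
    omega
  refine ⟨Y, y, hYdef, hdy, hY, hxy, ?_, hn, hX⟩
  have hdpos : 0 < d := hd1
  apply Nat.eq_of_mul_eq_mul_left hdpos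
  have h1 : d * (Y * y + 1) = n * x := by
    have e1 : d * (Y * y + 1) = Y * (d * y) + d := by ring
    rw [e1, hdy]
    have e2 : n * x = (X * Y + m) * x := by rw [hn]
    rw [e2]
    have e3 : (X * Y + m) * x = X * Y * x + m * x := by ring
    rw [e3, hmx]
    ring
  calc d * ((X * x + 1) * (Y * y + 1)) = (X * x + 1) * (d * (Y * y + 1)) := by ring
    _ = (X * x + 1) * (n * x) := by rw [h1]
    _ = (d * y) * (n * x) := by rw [hdy]
    _ = d * (n * x * y) := by ring

lemma sol_bounds {n : ℕ} {q : ℕ × ℕ × ℕ × ℕ} (h : solPred n q) : q ∈ box (2*n^2+2) := by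
  obtain ⟨X, x, Y, y⟩ := q
  obtain ⟨hX, hY, hx, hxy, heq⟩ := h
  simp only at hX hY hx hxy heq ⊢
  obtain ⟨d, m, hdy, hmx, hmeq, hd1, hdX, hm1, hmn⟩ := sol_struct hX hY hx hxy heq
  have hXY1 : X ≤ X * Y := Nat.le_mul_of_pos_right X hY
  have hXY2 : Y ≤ X * Y := Nat.le_mul_of_pos_left Y hX
  have hXYs : X + Y ≤ X * Y + 1 := add_le_mul_succ hX hY
  have hxb : x ≤ m * x := Nat.le_mul_of_pos_left x hm1
  have hyb : y ≤ d * y := Nat.le_mul_of_pos_left y hd1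
  have hXx : X * x ≤ n * n := Nat.mul_le_mul (by omega) (by omega)
  have epow : n^2 = n * n := by ring
  have hnn : n ≤ n * n := Nat.le_mul_of_pos_left n (by omega)
  rw [mem_box']
  refine ⟨by omega, by omega, by omega, by omega⟩

lemma par_bounds {n : ℕ} {q : ℕ × ℕ × ℕ × ℕ} (h : parPred n q) : q ∈ box (n+1) := by
  obtain ⟨X, x, d, m⟩ := q
  obtain ⟨hd1, hdX, hx, hdvd, hdm, hm1, heq⟩ := h
  simp only at hd1 hdX hx hdvd hdm hm1 heq ⊢
  obtain ⟨Y, y, hYdef, hdy, hY, hxy, heq2, hn, hX⟩ := par_struct hd1 hdX hx hdvd hdm hm1 heq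
  have hXY1 : X ≤ X * Y := Nat.le_mul_of_pos_right X hY
  have hXYs : X + Y ≤ X * Y + 1 := add_le_mul_succ hX hY
  have hmx2 : m * x = Y + d := by omega
  have hxb : x ≤ m * x := Nat.le_mul_of_pos_left x hm1
  rw [mem_box']
  exact ⟨by omega, by omega, by omega, by omega⟩

lemma mem_solsF {n : ℕ} {q : ℕ × ℕ × ℕ × ℕ} : q ∈ solsF n ↔ solPred n q := by
  constructor
  · exact fun h => (mem_filter.mp h).2
  · exact fun h => mem_filter.mpr ⟨sol_bounds h, h⟩

lemma mem_paramsF {n : ℕ} {q : ℕ × ℕ × ℕ × ℕ} : q ∈ paramsF n ↔ parPred n q := by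
  constructor
  · exact fun h => (mem_filter.mp h).2
  · exact fun h => mem_filter.mpr ⟨par_bounds h, h⟩

lemma solsF_card (n : ℕ) : (solsF n).card = (paramsF n).card := by
  apply Finset.card_nbij'
    (i := fun q => (q.1, q.2.1, (q.1 * q.2.1 + 1) / q.2.2.2, n - q.1 * q.2.2.1))
    (j := fun q => (q.1, q.2.1, q.2.2.2 * q.2.1 - q.2.2.1, (q.1 * q.2.1 + 1) / q.2.2.1))
  · -- hi : maps into paramsF
    intro q hq
    obtain ⟨X, x, Y, y⟩ := q
    obtain ⟨hX, hY, hx, hxy, heq⟩ := mem_solsF.mp hq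
    simp only at hX hY hx hxy heq
    obtain ⟨d, m, hdy, hmx, hmeq, hd1, hdX, hm1, hmn⟩ := sol_struct hX hY hx hxy heq
    have hy : 0 < y := by omega
    have hdy' : X * x + 1 = y * d := by rw [← hdy]; exact Nat.mul_comm d y
    have hdiv : (X * x + 1) / y = d := Nat.div_eq_of_eq_mul_left hy hdy.symm
    have hmdiv : n - X * Y = m := by omega
    show (X, x, (X * x + 1) / y, n - X * Y) ∈ paramsF n
    rw [hdiv, hmdiv]
    exact mem_paramsF.mpr ⟨hd1, hdX, hx, ⟨y, hdy.symm⟩,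
      (show d < m * x by omega), hm1, hmeq⟩
  · -- hj : maps into solsF
    intro q hq
    obtain ⟨X, x, d, m⟩ := q
    obtain ⟨hd1, hdX, hx, hdvd, hdm, hm1, heq⟩ := mem_paramsF.mp hq
    simp only at hd1 hdX hx hdvd hdm hm1 heq
    obtain ⟨Y, y, hYdef, hdy, hY, hxy, heq2, hn, hX⟩ := par_struct hd1 hdX hx hdvd hdm hm1 heq
    have hdy'' : X * x + 1 = d * y := hdy.symm
    have hydiv : (X * x + 1) / d = y := Nat.div_eq_of_eq_mul_left (by omega) (by rw [← hdy]; exact Nat.mul_comm d y)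
    show (X, x, m * x - d, (X * x + 1) / d) ∈ solsF n
    rw [hydiv, ← hYdef]
    exact mem_solsF.mpr ⟨hX, hY, hx, hxy, heq2⟩
  · -- left inverse
    intro q hq
    obtain ⟨X, x, Y, y⟩ := q
    obtain ⟨hX, hY, hx, hxy, heq⟩ := mem_solsF.mp hq
    simp only at hX hY hx hxy heq
    obtain ⟨d, m, hdy, hmx, hmeq, hd1, hdX, hm1, hmn⟩ := sol_struct hX hY hx hxy heq
    have hy : 0 < y := by omega
    have hdy' : X * x + 1 = y * d := by rw [← hdy]; exact Nat.mul_comm d y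
    have hdiv : (X * x + 1) / y = d := Nat.div_eq_of_eq_mul_left hy hdy.symm
    have hdy'' : X * x + 1 = y * d := hdy'
    have hmdiv : n - X * Y = m := by omega
    show (X, x, (n - X * Y) * x - (X * x + 1) / y, (X * x + 1) / ((X * x + 1) / y))
        = (X, x, Y, y)
    rw [hdiv, hmdiv]
    rw [show m * x - d = Y by omega]
    rw [Nat.div_eq_of_eq_mul_left (show 0 < d by omega) (show X * x + 1 = y * d from hdy'')]
  · -- right inverse
    intro q hq
    obtain ⟨X, x, d, m⟩ := q
    obtain ⟨hd1, hdX, hx, hdvd, hdm, hm1, heq⟩ := mem_paramsF.mp hq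
    simp only at hd1 hdX hx hdvd hdm hm1 heq
    obtain ⟨Y, y, hYdef, hdy, hY, hxy, heq2, hn, hX⟩ := par_struct hd1 hdX hx hdvd hdm hm1 heq
    have hdy'' : X * x + 1 = d * y := hdy.symm
    have hydiv : (X * x + 1) / d = y := Nat.div_eq_of_eq_mul_left (by omega) (by rw [← hdy]; exact Nat.mul_comm d y)
    show (X, x, (X * x + 1) / ((X * x + 1) / d), n - X * (m * x - d)) = (X, x, d, m)
    rw [hydiv]
    rw [Nat.div_eq_of_eq_mul_left (show 0 < y by omega) (show X * x + 1 = d * y from hdy.symm)]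
    have hXY : X * (m * x - d) = X * Y := by rw [← hYdef]
    rw [show n - X * (m * x - d) = m by omega]

lemma numSolutions_eq (n : ℕ) : numSolutions n = (paramsF n).card := by
  have h1 : numSolutions n = Nat.card {q : ℕ × ℕ × ℕ × ℕ | solPred n q} := rfl
  have h2 : {q : ℕ × ℕ × ℕ × ℕ | solPred n q} = ↑(solsF n) := by
    ext q
    simp only [Set.mem_setOf_eq, mem_coe]
    exact ⟨fun h => mem_solsF.mpr h, fun h => mem_solsF.mp h⟩
  rw [h1, h2, Nat.card_coe_set_eq, Set.ncard_coe_finset, solsF_card]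

def bigP (N : ℕ) : Finset (ℕ × ℕ × ℕ × ℕ) := (Icc 2 N).biUnion paramsF

lemma sum_numSolutions (N : ℕ) :
    ∑ n ∈ Icc 2 N, numSolutions n = (bigP N).card := by
  rw [bigP, Finset.card_biUnion]
  · exact Finset.sum_congr rfl (fun n _ => numSolutions_eq n)
  · intro n₁ _ n₂ _ hne
    rw [Function.onFun, Finset.disjoint_left]
    intro q h1 h2
    obtain ⟨_, _, _, _, _, _, e1⟩ := mem_paramsF.mp h1
    obtain ⟨_, _, _, _, _, _, e2⟩ := mem_paramsF.mp h2
    omega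


/-! ### Harmonic sums -/

noncomputable def H (n : ℕ) : ℝ := ∑ i ∈ Icc 1 n, (i : ℝ)⁻¹

lemma H_eq (n : ℕ) : H n = (harmonic n : ℝ) := by
  rw [harmonic_eq_sum_Icc, H]
  push_cast
  rfl

lemma H_nonneg (n : ℕ) : 0 ≤ H n := by
  apply Finset.sum_nonneg
  intro i _
  positivity

lemma H_le (n : ℕ) : H n ≤ 1 + Real.log n := by
  rw [H_eq]; exact harmonic_le_one_add_log n

lemma le_H (n : ℕ) : Real.log (n + 1) ≤ H n := by
  rw [H_eq]
  have := log_add_one_le_harmonic n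
  push_cast at this ⊢
  exact this

lemma H_mono : Monotone H := by
  intro a b hab
  apply Finset.sum_le_sum_of_subset_of_nonneg
  · exact Finset.Icc_subset_Icc_right hab
  · intro i _ _; positivity

/-- partial fractions bound -/
lemma pf_sum (k : ℕ) :
    ∑ d ∈ Ico 1 k, (1 / (d * (k - d) : ℝ) : ℝ) ≤ 2 * (1 + Real.log k) / k := by
  rcases Nat.eq_zero_or_pos k with hk | hk
  · subst hk; simp
  have hkR : (0 : ℝ) < k := by exact_mod_cast hk
  have hsum : ∀ d ∈ Ico 1 k, (1 / (d * (k - d) : ℝ) : ℝ)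
      = (1 / k) * (1 / d + 1 / (k - d)) := by
    intro d hd
    rw [mem_Ico] at hd
    have h1 : (0 : ℝ) < d := by exact_mod_cast hd.1
    have h2 : (d : ℝ) < k := by exact_mod_cast hd.2
    have h3 : (0:ℝ) < (k:ℝ) - d := by linarith
    field_simp <;> ring
  have e1 : ∑ d ∈ Ico 1 k, (1 / (d : ℝ)) = H (k - 1) := by
    rw [H]
    apply Finset.sum_congr
    · ext a
      simp only [mem_Ico, mem_Icc]
      omega
    · intro i _; rw [one_div]
  have e2 : ∑ d ∈ Ico 1 k, (1 / ((k - d : ℕ) : ℝ)) = ∑ d ∈ Ico 1 k, (1 / (d : ℝ)) := by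
    apply Finset.sum_nbij' (i := fun d => k - d) (j := fun d => k - d)
    · intro a ha; rw [mem_Ico] at *; omega
    · intro a ha; rw [mem_Ico] at *; omega
    · intro a ha; rw [mem_Ico] at ha; omega
    · intro a ha; rw [mem_Ico] at ha; omega
    · intro a ha
      rfl
  have e3 : ∑ d ∈ Ico 1 k, (1 / ((k : ℝ) - d)) = ∑ d ∈ Ico 1 k, (1 / ((k - d : ℕ) : ℝ)) := by
    apply Finset.sum_congr rfl
    intro d hd
    rw [mem_Ico] at hd
    congr 1
    have : d ≤ k := le_of_lt hd.2
    push_cast [this]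
    ring
  have hH : H (k - 1) ≤ 1 + Real.log k := le_trans (H_mono (by omega)) (H_le k)
  have h0 : 0 ≤ H (k - 1) := H_nonneg _
  calc ∑ d ∈ Ico 1 k, (1 / (d * (k - d) : ℝ) : ℝ)
      = ∑ d ∈ Ico 1 k, (1 / (k:ℝ)) * (1 / d + 1 / ((k:ℝ) - d)) := Finset.sum_congr rfl hsum
    _ = (1 / (k:ℝ)) * (∑ d ∈ Ico 1 k, (1 / (d:ℝ)) + ∑ d ∈ Ico 1 k, (1 / ((k:ℝ) - d))) := by
        rw [← Finset.mul_sum, Finset.sum_add_distrib]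
    _ = (1 / (k:ℝ)) * (H (k - 1) + H (k - 1)) := by rw [e3, e2, e1]
    _ ≤ (1 / (k:ℝ)) * (2 * (1 + Real.log k)) := by
        apply mul_le_mul_of_nonneg_left (by linarith) (by positivity)
    _ = 2 * (1 + Real.log k) / k := by
        field_simp

/-! ### Upper bound -/

/-- The fiber over `(x, m, d)` of `bigP N` has at most `(N / (m*x - d)) / d` elements. -/
lemma fiber_bound (N x d m : ℕ) :
    ((bigP N).filter (fun q => (q.2.1, q.2.2.2, q.2.2.1) = (x, m, d))).card
      ≤ if 1 ≤ d ∧ d < m * x then (N / (m * x - d)) / d else 0 := by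
  set S := (bigP N).filter (fun q => (q.2.1, q.2.2.2, q.2.2.1) = (x, m, d)) with hS
  rcases S.eq_empty_or_nonempty with he | hne
  · rw [he, card_empty]
    exact Nat.zero_le _
  -- basic facts about members
  have hmem : ∀ q ∈ S, q = (q.1, x, d, m) ∧ d ∣ q.1 * x + 1 ∧ 1 ≤ d ∧ d < m * x
      ∧ d ≤ q.1 ∧ q.1 * (m * x - d) ≤ N := by
    intro q hq
    rw [hS, mem_filter] at hq
    obtain ⟨hq1, hq2⟩ := hq
    rw [Prod.mk.injEq, Prod.mk.injEq] at hq2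
    obtain ⟨hx, hm, hd⟩ := hq2
    rw [bigP, Finset.mem_biUnion] at hq1
    obtain ⟨n, hn, hqn⟩ := hq1
    rw [mem_Icc] at hn
    obtain ⟨hd1, hdX, hx1, hdvd, hdm, hm1, heq⟩ := mem_paramsF.mp hqn
    rw [hx] at hdvd heq hdm
    rw [hd] at hd1 hdX hdvd hdm heq
    rw [hm] at hdm heq
    refine ⟨?_, hdvd, hd1, hdm, hdX, ?_⟩
    · rw [← hx, ← hd, ← hm]
    · have hkey : q.1 * (m * x - d) + m = n := by
        have e : m * (q.1 * x + 1) = q.1 * (m * x) + m := by ring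
        rw [e] at heq
        have e2 : q.1 * (m * x) = q.1 * (m * x - d) + q.1 * d := by
          have h5 : m * x - d + d = m * x := by omega
          calc q.1 * (m * x) = q.1 * (m * x - d + d) := by rw [h5]
            _ = q.1 * (m * x - d) + q.1 * d := by ring
        rw [e2] at heq
        omega
      omega
  obtain ⟨q₀, hq₀⟩ := hne
  obtain ⟨_, _, hd1, hdm, _, _⟩ := hmem q₀ hq₀
  rw [if_pos ⟨hd1, hdm⟩]
  set M := N / (m * x - d) with hM
  -- every member's first coordinate is in [d, M], ≡ fixed residue mod d
  have hXle : ∀ q ∈ S, q.1 ≤ M := by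
    intro q hq
    obtain ⟨_, _, _, hdm', _, h6⟩ := hmem q hq
    rw [hM]
    exact Nat.le_div_iff_mul_le (by omega) |>.mpr h6
  -- S has the same card as the image of first coordinates
  have hcard : S.card = (S.image (fun q => q.1)).card := by
    rw [Finset.card_image_of_injOn]
    intro q1 h1 q2 h2 hq
    rw [Finset.mem_coe] at h1 h2
    simp only at hq
    have e1 := (hmem q1 h1).1
    have e2 := (hmem q2 h2).1
    rw [e1, e2, hq]
  rw [hcard]
  set S' := S.image (fun q => q.1) with hS'
  have hS'facts : ∀ X ∈ S', d ∣ X * x + 1 ∧ d ≤ X ∧ X ≤ M := by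
    intro X hX
    rw [hS', Finset.mem_image] at hX
    obtain ⟨q, hq, rfl⟩ := hX
    obtain ⟨_, h2, _, _, h5, _⟩ := hmem q hq
    exact ⟨h2, h5, hXle q hq⟩
  have hne' : S'.Nonempty := ⟨q₀.1, Finset.mem_image_of_mem _ hq₀⟩
  set X₀ := S'.min' hne' with hX₀
  have hX₀mem := S'.min'_mem hne'
  obtain ⟨hX₀dvd, hX₀ge, hX₀le⟩ := hS'facts X₀ hX₀mem
  -- coprimality of d and x
  have hcop : Nat.Coprime d x := by
    have h1 : Nat.gcd d x ∣ X₀ * x := Dvd.dvd.mul_left (Nat.gcd_dvd_right d x) X₀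
    have h2 : Nat.gcd d x ∣ X₀ * x + 1 := dvd_trans (Nat.gcd_dvd_left d x) hX₀dvd
    have h3 : Nat.gcd d x ∣ 1 := (Nat.dvd_add_right h1).mp h2
    exact Nat.dvd_one.mp h3
  have hdM : d ≤ M := le_trans hX₀ge hX₀le
  have hdvddiff : ∀ X ∈ S', d ∣ (X - X₀) := by
    intro X hX
    obtain ⟨hdvdX, hdge, hdle⟩ := hS'facts X hX
    have hX₀X : X₀ ≤ X := S'.min'_le X hX
    have h1 : d ∣ (X - X₀) * x := by
      have e : (X - X₀) * x = (X * x + 1) - (X₀ * x + 1) := by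
        rw [Nat.sub_mul]
        have : X₀ * x ≤ X * x := Nat.mul_le_mul_right x hX₀X
        omega
      rw [e]
      exact Nat.dvd_sub hdvdX hX₀dvd
    exact (Nat.Coprime.dvd_of_dvd_mul_right hcop h1)
  calc S'.card ≤ (range (M / d)).card := by
        apply Finset.card_le_card_of_injOn (f := fun X => (X - X₀) / d)
        · intro X hX
          obtain ⟨hdvdX, hdge, hdle⟩ := hS'facts X hX
          have hX₀X : X₀ ≤ X := S'.min'_le X hX
          rw [mem_coe, mem_range]
          show (X - X₀) / d < M / d
          have h2 : X - X₀ ≤ M - d := by omega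
          have h3 : (X - X₀)/d ≤ (M - d)/d := Nat.div_le_div_right h2
          have h4 : (M - d + d) / d = (M - d)/d + 1 := Nat.add_div_right _ (by omega)
          have h5 : M - d + d = M := by omega
          rw [h5] at h4
          omega
        · intro X1 h1 X2 h2 heq12
          simp only at heq12
          have d1 := hdvddiff X1 h1
          have d2 := hdvddiff X2 h2
          have e1 : d * ((X1 - X₀) / d) = X1 - X₀ := Nat.mul_div_cancel' d1
          have e2 : d * ((X2 - X₀) / d) = X2 - X₀ := Nat.mul_div_cancel' d2
          have g1 : X₀ ≤ X1 := S'.min'_le X1 h1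
          have g2 : X₀ ≤ X2 := S'.min'_le X2 h2
          rw [heq12] at e1
          omega
    _ = M / d := card_range _

/-- inner sum over d -/
lemma inner_d (N x m : ℕ) :
    ∑ d ∈ range (N+1), ((if 1 ≤ d ∧ d < m * x then (N / (m * x - d)) / d else 0 : ℕ) : ℝ)
      ≤ (N : ℝ) * (2 * (1 + Real.log (m * x : ℕ)) / ((m * x : ℕ) : ℝ)) := by
  have hrw : ∑ d ∈ range (N+1), ((if 1 ≤ d ∧ d < m * x then (N / (m * x - d)) / d else 0 : ℕ) : ℝ)
      = ∑ d ∈ (range (N+1)).filter (fun d => 1 ≤ d ∧ d < m * x),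
          (((N / (m * x - d)) / d : ℕ) : ℝ) := by
    rw [Finset.sum_filter]
    apply Finset.sum_congr rfl
    intro d _
    split <;> simp
  rw [hrw]
  have hterm : ∀ d ∈ (range (N+1)).filter (fun d => 1 ≤ d ∧ d < m * x),
      (((N / (m * x - d)) / d : ℕ) : ℝ) ≤ (N : ℝ) * (1 / (d * (((m * x : ℕ) : ℝ) - d))) := by
    intro d hd
    rw [mem_filter] at hd
    obtain ⟨_, hd1, hd2⟩ := hd
    have hpos1 : (0 : ℝ) < d := by exact_mod_cast hd1
    have hcast : ((m * x - d : ℕ) : ℝ) = ((m * x : ℕ) : ℝ) - (d : ℝ) := by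
      have : d ≤ m * x := le_of_lt hd2
      push_cast [this]; ring
    have hpos2 : (0 : ℝ) < ((m * x : ℕ) : ℝ) - (d : ℝ) := by
      rw [← hcast]
      have : 0 < m * x - d := by omega
      exact_mod_cast this
    rw [Nat.div_div_eq_div_mul]
    calc ((N / ((m * x - d) * d) : ℕ) : ℝ) ≤ (N : ℝ) / (((m * x - d) * d : ℕ) : ℝ) :=
          Nat.cast_div_le
      _ = (N : ℝ) * (1 / (d * (((m * x : ℕ) : ℝ) - d))) := by
          rw [Nat.cast_mul, hcast, one_div, ← div_eq_mul_inv,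
            mul_comm ((d:ℝ)) (((m * x : ℕ) : ℝ) - (d:ℝ))]
  calc ∑ d ∈ (range (N+1)).filter (fun d => 1 ≤ d ∧ d < m * x),
        (((N / (m * x - d)) / d : ℕ) : ℝ)
      ≤ ∑ d ∈ (range (N+1)).filter (fun d => 1 ≤ d ∧ d < m * x),
          (N : ℝ) * (1 / (d * (((m * x : ℕ) : ℝ) - d))) := Finset.sum_le_sum hterm
    _ ≤ ∑ d ∈ Ico 1 (m * x), (N : ℝ) * (1 / (d * (((m * x : ℕ) : ℝ) - d))) := by
        apply Finset.sum_le_sum_of_subset_of_nonneg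
        · intro d hd
          rw [mem_filter] at hd
          rw [mem_Ico]
          exact hd.2
        · intro d hd _
          rw [mem_Ico] at hd
          have h2 : (0:ℝ) < (d:ℝ) := by exact_mod_cast hd.1
          have h3 : (d:ℝ) < ((m*x : ℕ):ℝ) := by exact_mod_cast hd.2
          apply mul_nonneg (Nat.cast_nonneg N)
          apply le_of_lt
          apply div_pos one_pos
          apply mul_pos h2 (by linarith)
    _ = (N : ℝ) * ∑ d ∈ Ico 1 (m * x), (1 / (d * (((m * x : ℕ) : ℝ) - d))) := by
        rw [Finset.mul_sum]
    _ ≤ (N : ℝ) * (2 * (1 + Real.log (m * x : ℕ)) / ((m * x : ℕ) : ℝ)) := by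
        apply mul_le_mul_of_nonneg_left _ (Nat.cast_nonneg N)
        exact_mod_cast pf_sum (m * x)

lemma range_inv_sum (N : ℕ) : ∑ x ∈ range (N+1), ((x : ℝ))⁻¹ = H N := by
  have e : range (N+1) = insert 0 (Icc 1 N) := by
    ext a
    simp only [mem_range, mem_insert, mem_Icc]
    omega
  rw [e, Finset.sum_insert (by simp), H]
  simp

lemma bigP_le (N : ℕ) :
    ((bigP N).card : ℝ) ≤ 2 * N * (1 + 2 * Real.log N) * (H N)^2 := by
  have hfib : (bigP N).card = ∑ t ∈ range (N+1) ×ˢ range (N+1) ×ˢ range (N+1),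
      ((bigP N).filter (fun q => (q.2.1, q.2.2.2, q.2.2.1) = t)).card := by
    apply Finset.card_eq_sum_card_fiberwise
    intro q hq
    rw [mem_coe, bigP, Finset.mem_biUnion] at hq
    obtain ⟨n, hn, hqn⟩ := hq
    rw [mem_Icc] at hn
    have hbox := mem_box.mp (mem_filter.mp hqn).1
    simp only [mem_coe, mem_product, mem_range]
    exact ⟨by omega, by omega, by omega⟩
  rw [hfib]
  push_cast
  calc ∑ t ∈ range (N+1) ×ˢ range (N+1) ×ˢ range (N+1),
        (((bigP N).filter (fun q => (q.2.1, q.2.2.2, q.2.2.1) = t)).card : ℝ)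
      ≤ ∑ t ∈ range (N+1) ×ˢ range (N+1) ×ˢ range (N+1),
          ((if 1 ≤ t.2.2 ∧ t.2.2 < t.2.1 * t.1 then (N / (t.2.1 * t.1 - t.2.2)) / t.2.2 else 0 : ℕ) : ℝ) := by
        apply Finset.sum_le_sum
        intro t _
        have := fiber_bound N t.1 t.2.2 t.2.1
        exact_mod_cast this
    _ = ∑ x ∈ range (N+1), ∑ m ∈ range (N+1), ∑ d ∈ range (N+1),
          ((if 1 ≤ d ∧ d < m * x then (N / (m * x - d)) / d else 0 : ℕ) : ℝ) := by
        rw [Finset.sum_product]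
        apply Finset.sum_congr rfl
        intro x _
        rw [Finset.sum_product]
    _ ≤ ∑ x ∈ range (N+1), ∑ m ∈ range (N+1),
          (N : ℝ) * (2 * (1 + Real.log (m * x : ℕ)) / ((m * x : ℕ) : ℝ)) := by
        apply Finset.sum_le_sum
        intro x _
        apply Finset.sum_le_sum
        intro m _
        exact inner_d N x m
    _ ≤ ∑ x ∈ range (N+1), ∑ m ∈ range (N+1),
          2 * N * (1 + 2 * Real.log N) * ((x:ℝ)⁻¹ * (m:ℝ)⁻¹) := by
        apply Finset.sum_le_sum
        intro x hx
        apply Finset.sum_le_sum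
        intro m hm
        rw [mem_range] at hx hm
        rcases Nat.eq_zero_or_pos (m * x) with h0 | hpos
        · rw [h0]
          simp only [Nat.cast_zero, div_zero, mul_zero]
          have hNlog : 0 ≤ 1 + 2 * Real.log N := by
            have := Real.log_natCast_nonneg N
            linarith
          positivity
        · have hm1 : 1 ≤ m := by
            rcases Nat.eq_zero_or_pos m with h | h
            · exfalso; subst h; simp at hpos
            · exact h
          have hx1 : 1 ≤ x := by
            rcases Nat.eq_zero_or_pos x with h | h
            · exfalso; subst h; simp at hpos
            · exact h
          have hN1 : 1 ≤ N := by omega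
          have hmR : (0:ℝ) < m := by exact_mod_cast hm1
          have hxR : (0:ℝ) < x := by exact_mod_cast hx1
          have hNR : (0:ℝ) ≤ N := Nat.cast_nonneg N
          have hmx : ((m * x : ℕ) : ℝ) = (m:ℝ) * (x:ℝ) := by push_cast; ring
          have hlog : Real.log ((m * x : ℕ) : ℝ) ≤ 2 * Real.log N := by
            rw [hmx, Real.log_mul (ne_of_gt hmR) (ne_of_gt hxR)]
            have l1 : Real.log m ≤ Real.log N := by
              apply Real.log_le_log hmR
              exact_mod_cast (by omega : m ≤ N)
            have l2 : Real.log x ≤ Real.log N := by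
              apply Real.log_le_log hxR
              exact_mod_cast (by omega : x ≤ N)
            linarith
          have hfrac : (0:ℝ) < ((m * x : ℕ) : ℝ) := by rw [hmx]; exact mul_pos hmR hxR
          have e1 : (N:ℝ) * (2 * (1 + Real.log ((m * x : ℕ):ℝ)) / ((m * x : ℕ):ℝ))
              = (2 * N * (1 + Real.log ((m * x : ℕ):ℝ))) * (((m * x : ℕ):ℝ))⁻¹ := by
            rw [div_eq_mul_inv]; ring
          have e2 : 2 * (N:ℝ) * (1 + 2 * Real.log N) * ((x:ℝ)⁻¹ * (m:ℝ)⁻¹)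
              = (2 * N * (1 + 2 * Real.log N)) * (((m * x : ℕ):ℝ))⁻¹ := by
            rw [hmx, mul_inv]; ring
          rw [e1, e2]
          apply mul_le_mul_of_nonneg_right _ (inv_nonneg.mpr (le_of_lt hfrac))
          apply mul_le_mul_of_nonneg_left (by linarith) (by positivity)
    _ = 2 * N * (1 + 2 * Real.log N) * (H N)^2 := by
        have : ∑ x ∈ range (N+1), ∑ m ∈ range (N+1),
            2 * N * (1 + 2 * Real.log N) * ((x:ℝ)⁻¹ * (m:ℝ)⁻¹)
            = 2 * N * (1 + 2 * Real.log N) *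
              ((∑ x ∈ range (N+1), (x:ℝ)⁻¹) * (∑ m ∈ range (N+1), (m:ℝ)⁻¹)) := by
          rw [Finset.sum_mul_sum]
          rw [Finset.mul_sum]
          apply Finset.sum_congr rfl
          intro x _
          rw [Finset.mul_sum]
        rw [this, range_inv_sum]
        ring


/-! ### Lower bound -/

/-- residue `-(x⁻¹) mod d` -/
noncomputable def rr (d x : ℕ) : ℕ := ZMod.val (-(x : ZMod d)⁻¹)

noncomputable def Xf (d x t : ℕ) : ℕ := rr d x + d * (t + 1)

lemma rr_lt {d : ℕ} (hd : 0 < d) (x : ℕ) : rr d x < d := by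
  haveI : NeZero d := ⟨by omega⟩
  exact ZMod.val_lt _

lemma Xf_dvd {d x : ℕ} (t : ℕ) (hd : 0 < d) (hcop : Nat.Coprime d x) :
    d ∣ Xf d x t * x + 1 := by
  haveI : NeZero d := ⟨by omega⟩
  rw [← ZMod.natCast_eq_zero_iff]
  have h1 : ((rr d x : ℕ) : ZMod d) = -(x : ZMod d)⁻¹ := ZMod.natCast_rightInverse _
  have h3 : (x : ZMod d) * (x : ZMod d)⁻¹ = 1 := ZMod.coe_mul_inv_eq_one x hcop.symm
  have h4 : (x : ZMod d)⁻¹ * (x : ZMod d) = 1 := by rw [mul_comm]; exact h3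
  show (((rr d x + d * (t + 1)) * x + 1 : ℕ) : ZMod d) = 0
  push_cast
  rw [h1, ZMod.natCast_self]
  linear_combination (-1 : ZMod d) * h4

lemma Xf_ge {d x t : ℕ} : d ≤ Xf d x t := by
  rw [Xf]
  have : d ≤ d * (t + 1) := Nat.le_mul_of_pos_right d (by omega)
  omega

lemma Xf_pos {d x t : ℕ} (hd : 0 < d) : 0 < Xf d x t := lt_of_lt_of_le hd Xf_ge

lemma Xf_le {d x t : ℕ} (hd : 0 < d) : Xf d x t ≤ d * (t + 2) := by
  rw [Xf]
  have h1 : rr d x < d := rr_lt hd x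
  have e : d * (t + 2) = d * (t + 1) + d := by ring
  omega

/-- Basel-type bound -/
lemma basel (p : ℕ) : ∑ g ∈ Icc 1 p, (1 / ((g:ℝ) * (g:ℝ))) ≤ 2 := by
  rcases Nat.eq_zero_or_pos p with h0 | hp
  · subst h0; simp
  have key : ∀ q : ℕ, 1 ≤ q → ∑ g ∈ Icc 1 q, (1 / ((g:ℝ) * (g:ℝ))) ≤ 2 - 1 / q := by
    intro q hq
    induction q, hq using Nat.le_induction with
    | base => norm_num
    | succ q hq ih =>
      rw [Finset.sum_Icc_succ_top (by omega : 1 ≤ q + 1)]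
      have hq1 : (0:ℝ) < q := by exact_mod_cast hq
      have hq2 : (0:ℝ) < (q:ℝ) + 1 := by linarith
      have hcast : ((q + 1 : ℕ) : ℝ) = (q:ℝ) + 1 := by push_cast; ring
      rw [hcast]
      have hstep : 1 / (((q:ℝ) + 1) * ((q:ℝ) + 1)) ≤ 1 / q - 1 / ((q:ℝ) + 1) := by
        rw [div_sub_div _ _ (ne_of_gt hq1) (ne_of_gt hq2)]
        rw [div_le_div_iff₀ (by positivity) (by positivity)]
        ring_nf
        nlinarith
      linarith
  have := key p hp
  have hp1 : (0:ℝ) < p := by exact_mod_cast hp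
  have : 0 < 1 / (p:ℝ) := by positivity
  linarith [key p hp]

lemma H_succ (n : ℕ) : H (n + 1) = H n + (((n:ℝ) + 1))⁻¹ := by
  rw [H, H, Finset.sum_Icc_succ_top (by omega : 1 ≤ n + 1)]
  push_cast
  ring

lemma H_one : H 1 = 1 := by
  rw [H]
  norm_num

lemma sum_t (p : ℕ) : ∑ t ∈ range p, ((t:ℝ) + 2)⁻¹ = H (p + 1) - 1 := by
  induction p with
  | zero =>
    rw [show (0:ℕ) + 1 = 1 from rfl, H_one]
    simp
  | succ p ih =>
    rw [Finset.sum_range_succ, ih, H_succ (p+1)]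
    push_cast
    ring

def psiF : ℕ × ℕ → ℕ × ℕ × ℕ :=
  fun z => (Nat.gcd z.1 z.2, z.1 / Nat.gcd z.1 z.2, z.2 / Nat.gcd z.1 z.2)

noncomputable def wVal : ℕ × ℕ × ℕ → ℝ :=
  fun w => (1 / ((w.1:ℝ) * (w.1:ℝ))) * (((w.2.1 : ℝ))⁻¹ * ((w.2.2 : ℝ))⁻¹)

/-- the coprime-pairs sum over the square, with gcd-extraction -/
lemma cop_sum (p : ℕ) :
    (H p)^2 ≤ 2 * ∑ z ∈ (Icc 1 p ×ˢ Icc 1 p).filter (fun z => Nat.gcd z.1 z.2 = 1),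
      ((z.1 : ℝ))⁻¹ * ((z.2 : ℝ))⁻¹ := by
  set F0 := (Icc 1 p ×ˢ Icc 1 p).filter (fun z => Nat.gcd z.1 z.2 = 1) with hF0
  have hF0nonneg : (0:ℝ) ≤ ∑ z ∈ F0, ((z.1 : ℝ))⁻¹ * ((z.2 : ℝ))⁻¹ := by
    apply Finset.sum_nonneg
    intro z _
    positivity
  have hsq : (H p)^2 = ∑ z ∈ Icc 1 p ×ˢ Icc 1 p, ((z.1 : ℝ))⁻¹ * ((z.2 : ℝ))⁻¹ := by
    rw [Finset.sum_product]
    rw [H, sq]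
    rw [Finset.sum_mul_sum]
  rw [hsq]
  have hψ : ∀ z ∈ Icc 1 p ×ˢ Icc 1 p, ((z.1 : ℝ))⁻¹ * ((z.2 : ℝ))⁻¹ = wVal (psiF z) := by
    intro z hz
    rw [mem_product, mem_Icc, mem_Icc] at hz
    obtain ⟨⟨hd1, hdp⟩, hx1, hxp⟩ := hz
    set g := Nat.gcd z.1 z.2 with hg
    have hgpos : 0 < g := Nat.gcd_pos_of_pos_left _ (by omega)
    have hda : g * (z.1 / g) = z.1 := Nat.mul_div_cancel' (Nat.gcd_dvd_left _ _)
    have hdb : g * (z.2 / g) = z.2 := Nat.mul_div_cancel' (Nat.gcd_dvd_right _ _)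
    have hapos : 0 < z.1 / g :=
      Nat.div_pos (Nat.le_of_dvd (by omega) (Nat.gcd_dvd_left _ _)) hgpos
    have hbpos : 0 < z.2 / g :=
      Nat.div_pos (Nat.le_of_dvd (by omega) (Nat.gcd_dvd_right _ _)) hgpos
    rw [wVal, psiF]
    simp only
    rw [← hg]
    have c1 : (z.1 : ℝ) = (g : ℝ) * ((z.1 / g : ℕ) : ℝ) := by exact_mod_cast hda.symm
    have c2 : (z.2 : ℝ) = (g : ℝ) * ((z.2 / g : ℕ) : ℝ) := by exact_mod_cast hdb.symm
    rw [c1, c2]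
    have hgR : (0:ℝ) < (g:ℝ) := by exact_mod_cast hgpos
    have haR : (0:ℝ) < ((z.1 / g : ℕ):ℝ) := by exact_mod_cast hapos
    have hbR : (0:ℝ) < ((z.2 / g : ℕ):ℝ) := by exact_mod_cast hbpos
    field_simp
  have hinj : ∀ z1 ∈ Icc 1 p ×ˢ Icc 1 p, ∀ z2 ∈ Icc 1 p ×ˢ Icc 1 p,
      psiF z1 = psiF z2 → z1 = z2 := by
    intro z1 h1 z2 h2 heq
    rw [psiF, psiF] at heq
    simp only [Prod.mk.injEq] at heq
    obtain ⟨e1, e2, e3⟩ := heq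
    have d1 : Nat.gcd z1.1 z1.2 * (z1.1 / Nat.gcd z1.1 z1.2) = z1.1 :=
      Nat.mul_div_cancel' (Nat.gcd_dvd_left _ _)
    have d2 : Nat.gcd z1.1 z1.2 * (z1.2 / Nat.gcd z1.1 z1.2) = z1.2 :=
      Nat.mul_div_cancel' (Nat.gcd_dvd_right _ _)
    have d3 : Nat.gcd z2.1 z2.2 * (z2.1 / Nat.gcd z2.1 z2.2) = z2.1 :=
      Nat.mul_div_cancel' (Nat.gcd_dvd_left _ _)
    have d4 : Nat.gcd z2.1 z2.2 * (z2.2 / Nat.gcd z2.1 z2.2) = z2.2 :=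
      Nat.mul_div_cancel' (Nat.gcd_dvd_right _ _)
    have ha : z1.1 = z2.1 := by rw [← d1, ← d3, e2, e1]
    have hb : z1.2 = z2.2 := by rw [← d2, ← d4, e3, e1]
    exact Prod.ext ha hb
  have hsub : (Icc 1 p ×ˢ Icc 1 p).image psiF ⊆ Icc 1 p ×ˢ F0 := by
    intro w hw
    rw [Finset.mem_image] at hw
    obtain ⟨z, hz, rfl⟩ := hw
    rw [mem_product, mem_Icc, mem_Icc] at hz
    obtain ⟨⟨hd1, hdp⟩, hx1, hxp⟩ := hz
    have hgpos : 0 < Nat.gcd z.1 z.2 := Nat.gcd_pos_of_pos_left _ (by omega)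
    rw [psiF]
    rw [mem_product, mem_Icc, hF0, mem_filter, mem_product, mem_Icc, mem_Icc]
    refine ⟨⟨hgpos, le_trans (Nat.gcd_le_left _ (by omega)) hdp⟩, ⟨⟨?_, ?_⟩, ⟨?_, ?_⟩⟩, ?_⟩
    · exact Nat.div_pos (Nat.le_of_dvd (by omega) (Nat.gcd_dvd_left _ _)) hgpos
    · exact le_trans (Nat.div_le_self _ _) hdp
    · exact Nat.div_pos (Nat.le_of_dvd (by omega) (Nat.gcd_dvd_right _ _)) hgpos
    · exact le_trans (Nat.div_le_self _ _) hxp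
    · exact Nat.coprime_div_gcd_div_gcd hgpos
  calc ∑ z ∈ Icc 1 p ×ˢ Icc 1 p, ((z.1 : ℝ))⁻¹ * ((z.2 : ℝ))⁻¹
      = ∑ z ∈ Icc 1 p ×ˢ Icc 1 p, wVal (psiF z) := Finset.sum_congr rfl hψ
    _ = ∑ w ∈ (Icc 1 p ×ˢ Icc 1 p).image psiF, wVal w := (Finset.sum_image hinj).symm
    _ ≤ ∑ w ∈ Icc 1 p ×ˢ F0, wVal w := by
        apply Finset.sum_le_sum_of_subset_of_nonneg hsub
        intro w _ _
        rw [wVal]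
        positivity
    _ = (∑ g ∈ Icc 1 p, (1 / ((g:ℝ) * (g:ℝ)))) *
          (∑ z ∈ F0, ((z.1 : ℝ))⁻¹ * ((z.2 : ℝ))⁻¹) := by
        rw [Finset.sum_product, Finset.sum_mul]
        apply Finset.sum_congr rfl
        intro g _
        rw [Finset.mul_sum]
        apply Finset.sum_congr rfl
        intro z _
        rw [wVal]
    _ ≤ 2 * ∑ z ∈ F0, ((z.1 : ℝ))⁻¹ * ((z.2 : ℝ))⁻¹ :=
        mul_le_mul_of_nonneg_right (basel p) hF0nonneg

/-- Sum over coprime pairs with `x ≥ 2`. -/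
lemma cop_sum2 (p : ℕ) :
    (H p)^2 / 2 - H p ≤ ∑ z ∈ (Icc 1 p ×ˢ Icc 1 p).filter
      (fun z => Nat.gcd z.1 z.2 = 1 ∧ 2 ≤ z.2), ((z.1 : ℝ))⁻¹ * ((z.2 : ℝ))⁻¹ := by
  set F0 := (Icc 1 p ×ˢ Icc 1 p).filter (fun z => Nat.gcd z.1 z.2 = 1) with hF0
  have hsplit : ∑ z ∈ F0, ((z.1 : ℝ))⁻¹ * ((z.2 : ℝ))⁻¹
      = (∑ z ∈ F0.filter (fun z => 2 ≤ z.2), ((z.1 : ℝ))⁻¹ * ((z.2 : ℝ))⁻¹)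
        + ∑ z ∈ F0.filter (fun z => ¬ 2 ≤ z.2), ((z.1 : ℝ))⁻¹ * ((z.2 : ℝ))⁻¹ :=
    (Finset.sum_filter_add_sum_filter_not F0 _ _).symm
  have hstrip : ∑ z ∈ F0.filter (fun z => ¬ 2 ≤ z.2), ((z.1 : ℝ))⁻¹ * ((z.2 : ℝ))⁻¹
      ≤ H p := by
    have hsub : F0.filter (fun z => ¬ 2 ≤ z.2) ⊆ Icc 1 p ×ˢ ({1} : Finset ℕ) := by
      intro z hz
      rw [mem_filter, hF0, mem_filter, mem_product, mem_Icc, mem_Icc] at hz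
      rw [mem_product, mem_Icc, Finset.mem_singleton]
      obtain ⟨⟨⟨h1, h2⟩, _⟩, h3⟩ := hz
      exact ⟨h1, by omega⟩
    calc ∑ z ∈ F0.filter (fun z => ¬ 2 ≤ z.2), ((z.1 : ℝ))⁻¹ * ((z.2 : ℝ))⁻¹
        ≤ ∑ z ∈ Icc 1 p ×ˢ ({1} : Finset ℕ), ((z.1 : ℝ))⁻¹ * ((z.2 : ℝ))⁻¹ := by
          apply Finset.sum_le_sum_of_subset_of_nonneg hsub
          intro z _ _
          positivity
      _ = H p := by
          rw [Finset.sum_product, H]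
          apply Finset.sum_congr rfl
          intro d _
          rw [Finset.sum_singleton]
          norm_num
  have hcop := cop_sum p
  have e : (Icc 1 p ×ˢ Icc 1 p).filter (fun z => Nat.gcd z.1 z.2 = 1 ∧ 2 ≤ z.2)
      = F0.filter (fun z => 2 ≤ z.2) := by
    rw [hF0, Finset.filter_filter]
  rw [e]
  rw [← hF0] at hcop
  linarith



noncomputable def famX (g : (ℕ × ℕ) × ℕ) : ℕ := Xf g.1.1 g.1.2 g.2

noncomputable def famSet (K : ℕ) (g : (ℕ × ℕ) × ℕ) : Finset (ℕ × ℕ × ℕ × ℕ) :=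
  (Icc g.1.1 (K / (famX g * g.1.2))).image (fun m => (famX g, g.1.2, g.1.1, m))

set_option maxHeartbeats 1600000 in
lemma bigP_lower (N p : ℕ) (hp : 1 ≤ p) (hp4 : 4 * p^4 ≤ N / 2) :
    ((N / 2 : ℕ) : ℝ) / 2 * (H (p + 1) - 1) * ((H p)^2 / 2 - H p) ≤ ((bigP N).card : ℝ) := by
  set K := N / 2 with hK
  set G2 := (Icc 1 p ×ˢ Icc 1 p).filter (fun z => Nat.gcd z.1 z.2 = 1 ∧ 2 ≤ z.2) with hG2
  set G3 := G2 ×ˢ range p with hG3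
  have hginfo : ∀ g ∈ G3, 1 ≤ g.1.1 ∧ g.1.1 ≤ p ∧ 2 ≤ g.1.2 ∧ g.1.2 ≤ p ∧
      Nat.Coprime g.1.1 g.1.2 ∧ g.2 < p := by
    intro g hg
    rw [hG3, mem_product, hG2, mem_filter, mem_product, mem_Icc, mem_Icc, mem_range] at hg
    obtain ⟨⟨⟨⟨a1, a2⟩, ⟨a3, a4⟩⟩, a5, a6⟩, a7⟩ := hg
    exact ⟨a1, a2, a6, a4, a5, a7⟩
  have hXfacts : ∀ g ∈ G3, g.1.1 ≤ famX g ∧ famX g * g.1.2 ≤ 2 * p^3 ∧ 0 < famX g ∧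
      2 * p ≤ K / (famX g * g.1.2) ∧ famX g ≤ g.1.1 * (g.2 + 2) := by
    intro g hg
    obtain ⟨a1, a2, a3, a4, a5, a6⟩ := hginfo g hg
    have hd : 0 < g.1.1 := a1
    have hXle : famX g ≤ g.1.1 * (g.2 + 2) := Xf_le hd
    have hXle2 : famX g * g.1.2 ≤ 2 * p^3 := by
      have h1 : famX g ≤ p * (p + 1) := le_trans hXle (Nat.mul_le_mul a2 (by omega))
      have h2 : famX g * g.1.2 ≤ (p * (p + 1)) * p := Nat.mul_le_mul h1 a4
      have h3 : (p * (p + 1)) * p ≤ 2 * p^3 := by nlinarith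
      omega
    have hXpos : 0 < famX g := Xf_pos hd
    refine ⟨Xf_ge, hXle2, hXpos, ?_, hXle⟩
    have hxpos : 0 < famX g * g.1.2 := Nat.mul_pos hXpos (by omega)
    have s1 : K / (2 * p^3) ≤ K / (famX g * g.1.2) := Nat.div_le_div_left hXle2 hxpos
    have s2 : (4 * p^4) / (2 * p^3) ≤ K / (2 * p^3) := Nat.div_le_div_right hp4
    have s3 : (4 * p^4) / (2 * p^3) = 2 * p := by
      have e : 4 * p^4 = (2 * p) * (2 * p^3) := by ring
      rw [e, Nat.mul_div_cancel _ (by positivity)]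
    omega
  have hWsub : ∀ g ∈ G3, famSet K g ⊆ bigP N := by
    intro g hg q hq
    obtain ⟨a1, a2, a3, a4, a5, a6⟩ := hginfo g hg
    obtain ⟨hXg, hXx2p, hXpos, hM2p, hXdt⟩ := hXfacts g hg
    rw [famSet, Finset.mem_image] at hq
    obtain ⟨m, hm, rfl⟩ := hq
    rw [mem_Icc] at hm
    obtain ⟨hmd, hmM⟩ := hm
    have hm1 : 1 ≤ m := le_trans a1 hmd
    have hdvd : g.1.1 ∣ famX g * g.1.2 + 1 := Xf_dvd g.2 a1 a5
    have hdm : g.1.1 < m * g.1.2 := by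
      have h1 : m * 2 ≤ m * g.1.2 := Nat.mul_le_mul_left m a3
      omega
    have hXd : famX g * g.1.1 ≤ m * (famX g * g.1.2 + 1) := by
      have h1 : g.1.1 ≤ m * g.1.2 := by omega
      calc famX g * g.1.1 ≤ famX g * (m * g.1.2) := Nat.mul_le_mul_left _ h1
        _ = m * (famX g * g.1.2) := by ring
        _ ≤ m * (famX g * g.1.2 + 1) := Nat.mul_le_mul_left m (by omega)
    set n := m * (famX g * g.1.2 + 1) - famX g * g.1.1 with hn
    have heq : m * (famX g * g.1.2 + 1) = n + famX g * g.1.1 := by omega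
    have hkey : famX g * (m * g.1.2 - g.1.1) + m = n := by
      have e : m * (famX g * g.1.2 + 1) = famX g * (m * g.1.2) + m := by ring
      rw [e] at heq
      have e2 : famX g * (m * g.1.2) = famX g * (m * g.1.2 - g.1.1) + famX g * g.1.1 := by
        have h5 : m * g.1.2 - g.1.1 + g.1.1 = m * g.1.2 := by omega
        calc famX g * (m * g.1.2) = famX g * (m * g.1.2 - g.1.1 + g.1.1) := by rw [h5]
          _ = famX g * (m * g.1.2 - g.1.1) + famX g * g.1.1 := by ring
      rw [e2] at heq
      omega
    have hn2 : 2 ≤ n := by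
      have h1 : 1 ≤ m * g.1.2 - g.1.1 := by omega
      have h2 : 1 ≤ famX g * (m * g.1.2 - g.1.1) := by
        calc 1 = 1 * 1 := by ring
          _ ≤ famX g * (m * g.1.2 - g.1.1) := Nat.mul_le_mul hXpos h1
      omega
    have hnN : n ≤ N := by
      have h1 : m * (famX g * g.1.2) ≤ K := by
        rw [Nat.le_div_iff_mul_le (Nat.mul_pos hXpos (by omega : 0 < g.1.2))] at hmM
        linarith [hmM]
      have h2 : m ≤ m * (famX g * g.1.2) :=
        Nat.le_mul_of_pos_right m (Nat.mul_pos hXpos (by omega))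
      have h3 : m * (famX g * g.1.2 + 1) = m * (famX g * g.1.2) + m := by ring
      have h4 : 2 * K ≤ N := by omega
      omega
    rw [bigP, Finset.mem_biUnion]
    exact ⟨n, mem_Icc.mpr ⟨hn2, hnN⟩, mem_paramsF.mpr ⟨a1, hXg, a3, hdvd, hdm, hm1, heq⟩⟩
  set W := G3.biUnion (famSet K) with hW
  have hWbig : W ⊆ bigP N := by
    rw [hW]
    intro q hq
    rw [Finset.mem_biUnion] at hq
    obtain ⟨g, hg, hq2⟩ := hq
    exact hWsub g hg hq2
  have hdisj : ∀ g1 ∈ G3, ∀ g2 ∈ G3, g1 ≠ g2 → Disjoint (famSet K g1) (famSet K g2) := by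
    intro g1 h1 g2 h2 hne
    rw [Finset.disjoint_left]
    intro q hq1 hq2
    apply hne
    rw [famSet, Finset.mem_image] at hq1 hq2
    obtain ⟨m1, _, e1⟩ := hq1
    obtain ⟨m2, _, e2⟩ := hq2
    rw [← e2] at e1
    simp only [Prod.mk.injEq] at e1
    obtain ⟨eX, ex, ed, em⟩ := e1
    have hd2pos : 0 < g2.1.1 := (hginfo g2 h2).1
    rw [famX, famX, Xf, Xf, ed, ex] at eX
    have h5 : g2.1.1 * (g1.2 + 1) = g2.1.1 * (g2.2 + 1) := by omega
    have h6 : g1.2 + 1 = g2.2 + 1 := Nat.eq_of_mul_eq_mul_left hd2pos h5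
    exact Prod.ext (Prod.ext ed ex) (by omega)
  have hcard1 : W.card = ∑ g ∈ G3, (famSet K g).card := Finset.card_biUnion hdisj
  have hinj4 : ∀ (A B C : ℕ), Function.Injective (fun m : ℕ => (A, B, C, m)) := by
    intro A B C m1 m2 h
    simpa using h
  have hcard2 : ∀ g : (ℕ × ℕ) × ℕ, (famSet K g).card = K / (famX g * g.1.2) + 1 - g.1.1 := by
    intro g
    rw [famSet, Finset.card_image_of_injective _ (hinj4 _ _ _), Nat.card_Icc]
  have hreal : ∀ g ∈ G3, ((K:ℝ) / (2 * (g.1.2:ℝ) * (g.1.1:ℝ)) / ((g.2:ℝ) + 2))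
      ≤ ((famSet K g).card : ℝ) := by
    intro g hg
    obtain ⟨a1, a2, a3, a4, a5, a6⟩ := hginfo g hg
    obtain ⟨hXg, hXx2p, hXpos, hM2p, hXdt⟩ := hXfacts g hg
    rw [hcard2 g]
    set M := K / (famX g * g.1.2) with hM
    have hdM : g.1.1 ≤ M := by omega
    have hcast : ((M + 1 - g.1.1 : ℕ) : ℝ) = (M:ℝ) + 1 - (g.1.1:ℝ) := by
      rw [Nat.cast_sub (by omega : g.1.1 ≤ M + 1)]
      push_cast
      ring
    rw [hcast]
    have hXR : (0:ℝ) < (famX g : ℝ) := by exact_mod_cast hXpos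
    have hxR : (0:ℝ) < (g.1.2 : ℝ) := by exact_mod_cast (by omega : 0 < g.1.2)
    have hdR : (0:ℝ) < (g.1.1 : ℝ) := by exact_mod_cast a1
    have htR : (0:ℝ) < (g.2:ℝ) + 2 := by positivity
    have hXxR : (0:ℝ) < (famX g : ℝ) * (g.1.2 : ℝ) := mul_pos hXR hxR
    -- nat: K < (M+1) * (X x)
    have hnat : K < (M + 1) * (famX g * g.1.2) := by
      have h1 := Nat.div_add_mod K (famX g * g.1.2)
      have h2 : K % (famX g * g.1.2) < famX g * g.1.2 :=
        Nat.mod_lt _ (Nat.mul_pos hXpos (by omega))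
      rw [← hM] at h1
      have e : (M + 1) * (famX g * g.1.2) = (famX g * g.1.2) * M + famX g * g.1.2 := by ring
      omega
    have hA2 : (K:ℝ) / ((famX g : ℝ) * (g.1.2 : ℝ)) < (M:ℝ) + 1 := by
      rw [div_lt_iff₀ hXxR]
      have : (K:ℝ) < ((M:ℝ) + 1) * ((famX g : ℝ) * (g.1.2:ℝ)) := by exact_mod_cast hnat
      linarith
    -- nat: 2 d (X x) ≤ K
    have hA3 : 2 * ((g.1.1:ℝ)) * ((famX g : ℝ) * (g.1.2 : ℝ)) ≤ (K:ℝ) := by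
      have h1 : g.1.1 * (famX g * g.1.2) ≤ p * (2 * p^3) := Nat.mul_le_mul a2 hXx2p
      have h2 : 2 * (g.1.1 * (famX g * g.1.2)) ≤ 4 * p^4 := by nlinarith
      have h3 : 2 * (g.1.1 * (famX g * g.1.2)) ≤ K := by omega
      have := (Nat.cast_le (α := ℝ)).mpr h3
      push_cast at this
      linarith
    have hA4 : (g.1.1 : ℝ) ≤ (K:ℝ) / (2 * ((famX g : ℝ) * (g.1.2 : ℝ))) := by
      rw [le_div_iff₀ (by positivity)]
      linarith
    have hid : (K:ℝ) / ((famX g : ℝ) * (g.1.2 : ℝ))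
        = (K:ℝ) / (2 * ((famX g : ℝ) * (g.1.2 : ℝ)))
          + (K:ℝ) / (2 * ((famX g : ℝ) * (g.1.2 : ℝ))) := by
      field_simp
      ring
    have hstep1 : (K:ℝ) / (2 * ((famX g : ℝ) * (g.1.2 : ℝ))) ≤ (M:ℝ) + 1 - (g.1.1:ℝ) := by
      linarith
    -- X ≤ d (t+2)
    have hXdtR : (famX g : ℝ) ≤ (g.1.1 : ℝ) * ((g.2:ℝ) + 2) := by
      have := (Nat.cast_le (α := ℝ)).mpr hXdt
      push_cast at this
      linarith
    have hstep2 : (K:ℝ) / (2 * (g.1.2:ℝ) * (g.1.1:ℝ)) / ((g.2:ℝ) + 2)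
        ≤ (K:ℝ) / (2 * ((famX g : ℝ) * (g.1.2 : ℝ))) := by
      rw [div_div]
      apply div_le_div_of_nonneg_left (Nat.cast_nonneg K) (by positivity)
      nlinarith
    linarith
  have hsum1 : ∑ g ∈ G3, ((K:ℝ) / (2 * (g.1.2:ℝ) * (g.1.1:ℝ)) / ((g.2:ℝ) + 2))
      ≤ ((bigP N).card : ℝ) := by
    calc ∑ g ∈ G3, ((K:ℝ) / (2 * (g.1.2:ℝ) * (g.1.1:ℝ)) / ((g.2:ℝ) + 2))
        ≤ ∑ g ∈ G3, ((famSet K g).card : ℝ) := Finset.sum_le_sum hreal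
      _ = (W.card : ℝ) := by rw [hcard1]; push_cast; rfl
      _ ≤ ((bigP N).card : ℝ) := by exact_mod_cast Finset.card_le_card hWbig
  have hsum2 : ∑ g ∈ G3, ((K:ℝ) / (2 * (g.1.2:ℝ) * (g.1.1:ℝ)) / ((g.2:ℝ) + 2))
      = (∑ z ∈ G2, (K:ℝ) / (2 * (z.2:ℝ) * (z.1:ℝ))) * (H (p+1) - 1) := by
    rw [hG3, Finset.sum_product, Finset.sum_mul]
    apply Finset.sum_congr rfl
    intro z _
    rw [← sum_t p, Finset.mul_sum]
    apply Finset.sum_congr rfl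
    intro t _
    rw [div_eq_mul_inv ((K:ℝ) / (2 * (z.2:ℝ) * (z.1:ℝ)))]
  have hsum3 : (∑ z ∈ G2, (K:ℝ) / (2 * (z.2:ℝ) * (z.1:ℝ)))
      = ((K:ℝ) / 2) * ∑ z ∈ G2, ((z.1:ℝ))⁻¹ * ((z.2:ℝ))⁻¹ := by
    rw [Finset.mul_sum]
    apply Finset.sum_congr rfl
    intro z hz
    rw [hG2, mem_filter, mem_product, mem_Icc, mem_Icc] at hz
    have h1 : (0:ℝ) < (z.1:ℝ) := by exact_mod_cast hz.1.1.1
    have h2 : (0:ℝ) < (z.2:ℝ) := by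
      have : 0 < z.2 := by omega
      exact_mod_cast this
    rw [div_eq_mul_inv, div_eq_mul_inv, mul_inv, mul_inv]
    ring
  have hHp1 : 0 ≤ H (p+1) - 1 := by
    have : H 1 ≤ H (p+1) := H_mono (by omega)
    rw [H_one] at this
    linarith
  have hKnn : (0:ℝ) ≤ (K:ℝ)/2 := div_nonneg (Nat.cast_nonneg K) (by norm_num)
  have hcop := cop_sum2 p
  rw [← hG2] at hcop
  calc ((K:ℕ):ℝ) / 2 * (H (p + 1) - 1) * ((H p)^2 / 2 - H p)
      ≤ ((K:ℝ)/2) * (H (p + 1) - 1) * (∑ z ∈ G2, ((z.1:ℝ))⁻¹ * ((z.2:ℝ))⁻¹) := by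
        exact mul_le_mul_of_nonneg_left hcop (mul_nonneg hKnn hHp1)
    _ = (∑ z ∈ G2, (K:ℝ) / (2 * (z.2:ℝ) * (z.1:ℝ))) * (H (p+1) - 1) := by
        rw [hsum3]; ring
    _ = ∑ g ∈ G3, ((K:ℝ) / (2 * (g.1.2:ℝ) * (g.1.1:ℝ)) / ((g.2:ℝ) + 2)) := hsum2.symm
    _ ≤ ((bigP N).card : ℝ) := hsum1



lemma sum_eq_card (N : ℕ) :
    (∑ n ∈ Icc 2 N, (numSolutions n : ℝ)) = ((bigP N).card : ℝ) := by
  rw [← sum_numSolutions N]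
  exact (Nat.cast_sum _ _).symm

end AvgF


set_option maxHeartbeats 2000000 in
/-- Theorem 4: There exist positive constants `C₁, C₂` such that for
all sufficiently large `T`,
`C₁·T·(log T)³ < ∑_{n=2}^{⌊T⌋} f(n) < C₂·T·(log T)³`. -/
theorem average_f_bounds :
    ∃ C₁ C₂ : ℝ, 0 < C₁ ∧ 0 < C₂ ∧ ∃ T₀ : ℝ, ∀ T : ℝ, T₀ ≤ T →
      C₁ * T * Real.log T ^ 3 < (∑ n ∈ Finset.Icc 2 ⌊T⌋₊, (numSolutions n : ℝ)) ∧
      (∑ n ∈ Finset.Icc 2 ⌊T⌋₊, (numSolutions n : ℝ)) < C₂ * T * Real.log T ^ 3 := by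
  refine ⟨1/60000, 25, by norm_num, by norm_num, Real.exp 400, ?_⟩
  intro T hT
  set N := ⌊T⌋₊ with hN
  set L := Real.log T with hL
  have hTpos : (0:ℝ) < T := lt_of_lt_of_le (Real.exp_pos 400) hT
  have hlogT : (400:ℝ) ≤ L := by
    rw [hL, ← Real.log_exp 400]
    exact Real.log_le_log (Real.exp_pos 400) hT
  have hT1 : (1:ℝ) ≤ T := by
    have := Real.add_one_le_exp (400:ℝ)
    linarith
  have hN1 : 1 ≤ N := Nat.le_floor (by exact_mod_cast hT1)
  have hNT : (N:ℝ) ≤ T := Nat.floor_le (le_of_lt hTpos)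
  have hNgt : T - 1 < (N:ℝ) := by
    have := Nat.lt_floor_add_one T
    rw [← hN] at this
    linarith
  have hNpos : (0:ℝ) < (N:ℝ) := by exact_mod_cast hN1
  have hlogN : Real.log (N:ℝ) ≤ L := Real.log_le_log hNpos hNT
  have hlogN0 : (0:ℝ) ≤ Real.log (N:ℝ) := Real.log_natCast_nonneg N
  have hLpos0 : (0:ℝ) < L := by linarith
  have hTL3 : (0:ℝ) < T * L^3 := by
    apply mul_pos hTpos
    positivity
  rw [AvgF.sum_eq_card N]
  constructor
  · -- lower bound
    set A := Real.exp (L / 12) with hA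
    have hA34 : (34:ℝ) ≤ A := by
      have := Real.add_one_le_exp (L/12)
      linarith
    have hApos : (0:ℝ) < A := Real.exp_pos _
    set p := ⌊A⌋₊ with hp
    have hp1 : 1 ≤ p := Nat.le_floor (by push_cast; linarith)
    have hpA : (p:ℝ) ≤ A := Nat.floor_le (le_of_lt hApos)
    have hpA1 : A ≤ (p:ℝ) + 1 := le_of_lt (by
      have := Nat.lt_floor_add_one A
      rw [← hp] at this
      linarith)
    set B := Real.exp (L / 3) with hB
    have hAB : A^4 = B := by
      rw [hA, hB, ← Real.exp_nat_mul]
      congr 1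
      ring
    have hB3 : B^3 = T := by
      rw [hB, ← Real.exp_nat_mul]
      have e : ((3:ℕ):ℝ) * (L/3) = L := by push_cast; ring
      rw [e, hL, Real.exp_log hTpos]
    have hAB' : A ≤ B := by
      rw [hA, hB]
      apply Real.exp_le_exp.mpr
      linarith
    have hB34 : (34:ℝ) ≤ B := le_trans hA34 hAB'
    -- p^4 bound
    have hp4 : 4 * p^4 ≤ N / 2 := by
      rw [Nat.le_div_iff_mul_le (by norm_num : 0 < 2)]
      have hreal : (8:ℝ) * (p:ℝ)^4 ≤ (N:ℝ) := by
        have h1 : (p:ℝ)^4 ≤ A^4 := by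
          apply pow_le_pow_left₀ (Nat.cast_nonneg p) hpA
        have h2 : (8:ℝ) * B ≤ B^3 - 1 := by
          have hB2 : B^2 ≥ 34*B := by nlinarith
          have hB3' : B^3 ≥ 34*B^2 := by nlinarith [sq_nonneg B]
          linarith
        rw [hAB] at h1
        rw [hB3] at h2
        linarith
      have : ((4 * p^4 * 2 : ℕ) : ℝ) ≤ (N:ℝ) := by
        push_cast
        linarith
      exact_mod_cast this
    have hmain := AvgF.bigP_lower N p hp1 hp4
    -- harmonic lower bounds
    have hHp : L/12 ≤ AvgF.H p := by
      apply le_trans _ (AvgF.le_H p)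
      rw [← Real.log_exp (L/12), ← hA]
      apply Real.log_le_log hApos
      linarith
    have hHp1 : L/12 ≤ AvgF.H (p+1) := by
      apply le_trans _ (AvgF.le_H (p+1))
      rw [← Real.log_exp (L/12), ← hA]
      apply Real.log_le_log hApos
      push_cast
      linarith
    have hL33 : (33:ℝ) ≤ L/12 := by linarith
    have hf2 : L/13 ≤ AvgF.H (p+1) - 1 := by
      have : L/12 - 1 ≥ L/13 := by linarith
      linarith
    have hf3 : L^2/576 ≤ (AvgF.H p)^2/2 - AvgF.H p := by
      have h1 : (33:ℝ) ≤ AvgF.H p := le_trans hL33 hHp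
      have h2 : (L/12)^2 ≤ (AvgF.H p)^2 := by
        apply pow_le_pow_left₀ (by linarith) hHp
      have h3 : (AvgF.H p)^2/4 ≤ (AvgF.H p)^2/2 - AvgF.H p := by nlinarith
      have h4 : L^2/576 = (L/12)^2/4 := by ring
      nlinarith
    -- K bound
    have hK : T/4 ≤ ((N/2 : ℕ) : ℝ) := by
      have h1 : 2 * (N/2) + 1 ≥ N := by omega
      have h2 : ((2 * (N/2) + 1 : ℕ) : ℝ) ≥ (N:ℝ) := by exact_mod_cast h1
      push_cast at h2
      have h3 : ((N/2 : ℕ):ℝ) ≥ ((N:ℝ) - 1)/2 := by linarith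
      have h4 : (N:ℝ) ≥ T - 1 := le_of_lt hNgt
      have hT401 : (401:ℝ) ≤ T := by
        have := Real.add_one_le_exp (400:ℝ)
        linarith
      have h5 : T/4 ≤ (T - 2)/2 := by linarith
      linarith
    have hLpos : (0:ℝ) < L := by linarith
    have hchain : T/4/2 * (L/13) * (L^2/576) ≤
        ((N/2 : ℕ) : ℝ)/2 * (AvgF.H (p+1) - 1) * ((AvgF.H p)^2/2 - AvgF.H p) := by
      have n1 : (0:ℝ) ≤ T/4/2 := by positivity
      have n2 : (0:ℝ) ≤ L/13 := by positivity
      have n3 : (0:ℝ) ≤ L^2/576 := by positivity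
      have s1 : T/4/2 ≤ ((N/2:ℕ):ℝ)/2 := by linarith
      have t1 : T/4/2 * (L/13) ≤ ((N/2:ℕ):ℝ)/2 * (AvgF.H (p+1) - 1) :=
        mul_le_mul s1 hf2 n2 (by linarith)
      exact mul_le_mul t1 hf3 n3
        (mul_nonneg (by positivity) (by linarith))
    have hval : T/4/2 * (L/13) * (L^2/576) = T * L^3 / 59904 := by ring
    have hfinal : 1/60000 * T * L^3 < T * L^3 / 59904 := by nlinarith
    calc 1/60000 * T * Real.log T ^ 3 = 1/60000 * T * L^3 := by rw [hL]
      _ < T * L^3 / 59904 := hfinal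
      _ = T/4/2 * (L/13) * (L^2/576) := hval.symm
      _ ≤ ((N/2 : ℕ) : ℝ)/2 * (AvgF.H (p+1) - 1) * ((AvgF.H p)^2/2 - AvgF.H p) := hchain
      _ ≤ ((AvgF.bigP N).card : ℝ) := hmain
  · -- upper bound
    have hmain := AvgF.bigP_le N
    have hlogT1 : (1:ℝ) ≤ L := by linarith
    have b1 : 2*(N:ℝ) ≤ 2*T := by linarith
    have b2 : 1 + 2*Real.log (N:ℝ) ≤ 3*L := by linarith
    have b3 : (AvgF.H N)^2 ≤ (2*L)^2 := by
      have h1 : AvgF.H N ≤ 2*L := le_trans (AvgF.H_le N) (by linarith)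
      have h2 : 0 ≤ AvgF.H N := AvgF.H_nonneg N
      nlinarith
    have c1 : 2*(N:ℝ) * (1+2*Real.log (N:ℝ)) * (AvgF.H N)^2
        ≤ (2*T) * (3*L) * ((2*L)^2) := by
      have nn1 : (0:ℝ) ≤ 1 + 2*Real.log (N:ℝ) := by linarith
      have nn2 : (0:ℝ) ≤ 2*T := by linarith
      have nn3 : (0:ℝ) ≤ (2*T)*(3*L) := by nlinarith
      have t1 : 2*(N:ℝ) * (1+2*Real.log (N:ℝ)) ≤ (2*T)*(3*L) :=
        mul_le_mul b1 b2 nn1 nn2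
      exact mul_le_mul t1 b3 (sq_nonneg _) nn3
    have c2 : (2*T) * (3*L) * ((2*L)^2) = 24 * T * L^3 := by ring
    have c3 : 24 * T * L^3 < 25 * T * L^3 := by nlinarith
    calc ((AvgF.bigP N).card : ℝ) ≤ 2*(N:ℝ) * (1+2*Real.log (N:ℝ)) * (AvgF.H N)^2 := hmain
      _ ≤ (2*T) * (3*L) * ((2*L)^2) := c1
      _ < 25 * T * L^3 := by rw [c2]; exact c3
      _ = 25 * T * Real.log T ^ 3 := by rw [hL]
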